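/- Let G, H be finite groups, X ≤ G×H a subgroup, M a left 𝕜X-module, N a left 𝕜X°-module, and P a left 𝕜[X*X°]-module. Then there are isomorphisms of 𝕜-modules, natural in M, N and P: (a) Hom_{𝕜[X*X°]}(M ⊗^{X,X°}_{𝕜H} N, P) ≅ Hom_{𝕜X°}(N, LHom^{X,X*X°}_{𝕜G}(M,P)), and (b) Hom_{𝕜[X*X°]}(M ⊗^{X,X°}_{𝕜H} N, P) ≅ Hom_{𝕜X}(M, RHom^{X°,X*X°}_{𝕜G}(N,P)); in (a) the map sends f to (n ↦ (m ↦ f(m⊗n))). (Here X°*(X*X°) = X° and (X*X°)*X = X, so the LHom and RHom carry 𝕜X°- resp. 𝕜X-module structures.) -/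

import Mathlib

namespace Stmt8

/-- `k₁(X) = {g ∈ G ∣ (g,1) ∈ X}`. -/
def k1 {G H : Type*} [Group G] [Group H] (X : Subgroup (G × H)) : Subgroup G :=
  X.comap (MonoidHom.inl G H)

/-- `k₂(X) = {h ∈ H ∣ (1,h) ∈ X}`. -/
def k2 {G H : Type*} [Group G] [Group H] (X : Subgroup (G × H)) : Subgroup H :=
  X.comap (MonoidHom.inr G H)

/-- `p₁(X)`, the image of `X` under the first projection. -/
def p1 {G H : Type*} [Group G] [Group H] (X : Subgroup (G × H)) : Subgroup G :=
  X.map (MonoidHom.fst G H)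

/-- `p₂(X)`, the image of `X` under the second projection. -/
def p2 {G H : Type*} [Group G] [Group H] (X : Subgroup (G × H)) : Subgroup H :=
  X.map (MonoidHom.snd G H)

/-- The opposite subgroup `X° = {(h,g) ∣ (g,h) ∈ X}`. -/
def opp {G H : Type*} [Group G] [Group H] (X : Subgroup (G × H)) : Subgroup (H × G) :=
  X.map ((MulEquiv.prodComm : (G × H) ≃* (H × G)).toMonoidHom)

/-- The composition `X*Y` of subgroup correspondences. -/
def comp {G H K : Type*} [Group G] [Group H] [Group K]
    (X : Subgroup (G × H)) (Y : Subgroup (H × K)) : Subgroup (G × K) where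
  carrier := {gk | ∃ h : H, (gk.1, h) ∈ X ∧ (h, gk.2) ∈ Y}
  one_mem' := ⟨1, X.one_mem, Y.one_mem⟩
  mul_mem' := by
    rintro ⟨g, k⟩ ⟨g', k'⟩ ⟨h, hX, hY⟩ ⟨h', hX', hY'⟩
    exact ⟨h * h', X.mul_mem hX hX', Y.mul_mem hY hY'⟩
  inv_mem' := by
    rintro ⟨g, k⟩ ⟨h, hX, hY⟩
    exact ⟨h⁻¹, X.inv_mem hX, Y.inv_mem hY⟩

lemma mem_comp {G H K : Type*} [Group G] [Group H] [Group K]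
    {X : Subgroup (G × H)} {Y : Subgroup (H × K)} {x : G × K} :
    x ∈ comp X Y ↔ ∃ h : H, (x.1, h) ∈ X ∧ (h, x.2) ∈ Y := Iff.rfl

lemma mem_opp {G H : Type*} [Group G] [Group H] {X : Subgroup (G × H)} {x : H × G} :
    x ∈ opp X ↔ (x.2, x.1) ∈ X := by
  rw [opp, Subgroup.mem_map]
  constructor
  · rintro ⟨⟨g, h⟩, hgh, rfl⟩
    simpa using hgh
  · intro hx
    exact ⟨(x.2, x.1), hx, rfl⟩

/-- The diagonal subgroup `Δ(P) = {(g,g) ∣ g ∈ P} ≤ G × G`. -/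
def diag {G : Type*} [Group G] (P : Subgroup G) : Subgroup (G × G) :=
  (P.subtype.prod P.subtype).range

/-- The twisted diagonal subgroup `Δ(P,φ,Q) = {(φ y, y) ∣ y ∈ Q} ≤ G × H`. -/
def tdiag {G H : Type*} [Group G] [Group H] (P : Subgroup G) (Q : Subgroup H)
    (φ : Q ≃* P) : Subgroup (G × H) :=
  ((P.subtype.comp φ.toMonoidHom).prod Q.subtype).range

open scoped TensorProduct

section ExtendedTensor

variable {𝕜 : Type*} [CommRing 𝕜]

/-- The submodule of relations defining the balanced tensor product
`M ⊗_{𝕜[k₂(X)∩k₁(Y)]} N` over the middle group: it is spanned by the elements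
`(m·b) ⊗ n - m ⊗ (b·n)` with `b ∈ k₂(X)∩k₁(Y)`, where `m·b = (1,b⁻¹)·m` and
`b·n = (b,1)·n`. -/
def midRel {A B C : Type*} [Group A] [Group B] [Group C]
    {M N : Type*} [AddCommGroup M] [Module 𝕜 M] [AddCommGroup N] [Module 𝕜 N]
    (X : Subgroup (A × B)) (Y : Subgroup (B × C))
    (ρ : Representation 𝕜 ↥X M) (σ : Representation 𝕜 ↥Y N) :
    Submodule 𝕜 (M ⊗[𝕜] N) :=
  Submodule.span 𝕜 {z | ∃ (b : B) (h1 : (((1 : A), b⁻¹) : A × B) ∈ X)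
    (h2 : ((b, (1 : C)) : B × C) ∈ Y) (m : M) (n : N),
      z = (ρ ⟨((1 : A), b⁻¹), h1⟩ m) ⊗ₜ[𝕜] n - m ⊗ₜ[𝕜] (σ ⟨(b, (1 : C)), h2⟩ n)}

/-- The underlying `𝕜`-module of the extended tensor product `M ⊗^{X,Y}_{𝕜B} N`. -/
abbrev ExtTen {A B C : Type*} [Group A] [Group B] [Group C]
    {M N : Type*} [AddCommGroup M] [Module 𝕜 M] [AddCommGroup N] [Module 𝕜 N]
    (X : Subgroup (A × B)) (Y : Subgroup (B × C))
    (ρ : Representation 𝕜 ↥X M) (σ : Representation 𝕜 ↥Y N) :=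
  (M ⊗[𝕜] N) ⧸ midRel X Y ρ σ

/-- The canonical projection onto the extended tensor product. -/
def extMk {A B C : Type*} [Group A] [Group B] [Group C]
    {M N : Type*} [AddCommGroup M] [Module 𝕜 M] [AddCommGroup N] [Module 𝕜 N]
    (X : Subgroup (A × B)) (Y : Subgroup (B × C))
    (ρ : Representation 𝕜 ↥X M) (σ : Representation 𝕜 ↥Y N) :
    (M ⊗[𝕜] N) →ₗ[𝕜] ExtTen X Y ρ σ :=
  (midRel X Y ρ σ).mkQ

/-- The `𝕜`-module `LHom^{X,Y}_{𝕜A}(M,N) = Hom_{𝕜[k₁(X)∩k₁(Y)]}(M,N)` of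
`𝕜`-linear maps commuting with the actions of `k₁(X)∩k₁(Y)` (via `(a,1)`). -/
def lHomSub {A B C : Type*} [Group A] [Group B] [Group C]
    {M N : Type*} [AddCommGroup M] [Module 𝕜 M] [AddCommGroup N] [Module 𝕜 N]
    (X : Subgroup (A × B)) (Y : Subgroup (A × C))
    (ρ : Representation 𝕜 ↥X M) (σ : Representation 𝕜 ↥Y N) :
    Submodule 𝕜 (M →ₗ[𝕜] N) where
  carrier := {f | ∀ (a : A) (h1 : ((a, (1 : B)) : A × B) ∈ X)
      (h2 : ((a, (1 : C)) : A × C) ∈ Y) (m : M),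
        f (ρ ⟨(a, 1), h1⟩ m) = σ ⟨(a, 1), h2⟩ (f m)}
  add_mem' := by
    intro f g hf hg a h1 h2 m
    simp only [LinearMap.add_apply, hf a h1 h2 m, hg a h1 h2 m, map_add]
  zero_mem' := by
    intro a h1 h2 m
    simp
  smul_mem' := by
    intro c f hf a h1 h2 m
    simp only [LinearMap.smul_apply, hf a h1 h2 m, map_smul]

/-- The `𝕜`-module `RHom^{X,Y}_{𝕜A}(M,N) = Hom_{𝕜[k₂(X)∩k₂(Y)]}(M,N)` of
`𝕜`-linear maps commuting with the actions of `k₂(X)∩k₂(Y)` (via `(1,a)`). -/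
def rHomSub {A B C : Type*} [Group A] [Group B] [Group C]
    {M N : Type*} [AddCommGroup M] [Module 𝕜 M] [AddCommGroup N] [Module 𝕜 N]
    (X : Subgroup (B × A)) (Y : Subgroup (C × A))
    (ρ : Representation 𝕜 ↥X M) (σ : Representation 𝕜 ↥Y N) :
    Submodule 𝕜 (M →ₗ[𝕜] N) where
  carrier := {f | ∀ (a : A) (h1 : (((1 : B), a) : B × A) ∈ X)
      (h2 : (((1 : C), a) : C × A) ∈ Y) (m : M),
        f (ρ ⟨(1, a), h1⟩ m) = σ ⟨(1, a), h2⟩ (f m)}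
  add_mem' := by
    intro f g hf hg a h1 h2 m
    simp only [LinearMap.add_apply, hf a h1 h2 m, hg a h1 h2 m, map_add]
  zero_mem' := by
    intro a h1 h2 m
    simp
  smul_mem' := by
    intro c f hf a h1 h2 m
    simp only [LinearMap.smul_apply, hf a h1 h2 m, map_smul]

/-- The `𝕜`-module of `𝕜I`-linear maps between two representations of a group
`I`, e.g. `Hom_{𝕜[X*X°]}(-,-)` or `Hom_{𝕜X}(-,-)`. -/
def fullHomSub {I : Type*} [Group I]
    {M N : Type*} [AddCommGroup M] [Module 𝕜 M] [AddCommGroup N] [Module 𝕜 N]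
    (ρ : Representation 𝕜 I M) (σ : Representation 𝕜 I N) :
    Submodule 𝕜 (M →ₗ[𝕜] N) where
  carrier := {f | ∀ (x : I) (m : M), f (ρ x m) = σ x (f m)}
  add_mem' := by
    intro f g hf hg x m
    simp only [LinearMap.add_apply, hf x m, hg x m, map_add]
  zero_mem' := by
    intro x m
    simp
  smul_mem' := by
    intro c f hf x m
    simp only [LinearMap.smul_apply, hf x m, map_smul]

/-- Relations defining the induced module `Ind_{X'}^{X}(M') = 𝕜X ⊗_{𝕜X'} M'`:
spanned by `(b·a) ⊗ m - b ⊗ (a·m)` for `a ∈ X'`, `b ∈ X`. -/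
noncomputable def indRel {I : Type*} [Group I] (X' X : Subgroup I)
    {M' : Type*} [AddCommGroup M'] [Module 𝕜 M']
    (ρ' : Representation 𝕜 ↥X' M') :
    Submodule 𝕜 (MonoidAlgebra 𝕜 ↥X ⊗[𝕜] M') :=
  Submodule.span 𝕜 {z | ∃ (b : ↥X) (a : I) (h1 : a ∈ X') (h2 : a ∈ X) (m : M'),
    z = (MonoidAlgebra.single (b * ⟨a, h2⟩) (1 : 𝕜)) ⊗ₜ[𝕜] m -
        (MonoidAlgebra.single b (1 : 𝕜)) ⊗ₜ[𝕜] (ρ' ⟨a, h1⟩ m)}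

/-- The underlying `𝕜`-module of the induced module `Ind_{X'}^{X}(M')`. -/
abbrev Ind {I : Type*} [Group I] (X' X : Subgroup I)
    {M' : Type*} [AddCommGroup M'] [Module 𝕜 M']
    (ρ' : Representation 𝕜 ↥X' M') :=
  (MonoidAlgebra 𝕜 ↥X ⊗[𝕜] M') ⧸ indRel X' X ρ'

/-- The canonical projection onto the induced module. -/
noncomputable def indMk {I : Type*} [Group I] (X' X : Subgroup I)
    {M' : Type*} [AddCommGroup M'] [Module 𝕜 M']
    (ρ' : Representation 𝕜 ↥X' M') :
    (MonoidAlgebra 𝕜 ↥X ⊗[𝕜] M') →ₗ[𝕜] Ind X' X ρ' :=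
  (indRel X' X ρ').mkQ

end ExtendedTensor

section Homs

variable {G H : Type*} [Group G] [Group H]

lemma k1_prod_mem {X : Subgroup (G × H)} (u : ↥(k1 X)) :
    (((u : G), (1 : H)) : G × H) ∈ X := u.2

lemma k1_inv_prod_mem {X : Subgroup (G × H)} (u : ↥(k1 X)) :
    (((u : G)⁻¹, (1 : H)) : G × H) ∈ X := by
  simpa using X.inv_mem (k1_prod_mem u)

lemma k2_prod_mem {X : Subgroup (G × H)} (u : ↥(k2 X)) :
    (((1 : G), (u : H)) : G × H) ∈ X := u.2

/-- The embedding `k₁(X) →* X`, `u ↦ (u,1)`. -/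
def k1Hom (X : Subgroup (G × H)) : ↥(k1 X) →* ↥X where
  toFun u := ⟨((u : G), (1 : H)), u.2⟩
  map_one' := rfl
  map_mul' u v := Subtype.ext (by simp)

/-- The embedding `k₁(X) →* X°`, `u ↦ (1,u)`, giving the right `𝕜[k₁(X)]`-module
structure (read as a left module) on left `𝕜X°`-modules. -/
def k1HomOp (X : Subgroup (G × H)) : ↥(k1 X) →* ↥(opp X) where
  toFun u := ⟨((1 : H), (u : G)), mem_opp.mpr u.2⟩
  map_one' := rfl
  map_mul' u v := Subtype.ext (by simp)

/-- The embedding `k₂(X) →* X`, `u ↦ (1,u)`. -/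
def k2Hom (X : Subgroup (G × H)) : ↥(k2 X) →* ↥X where
  toFun u := ⟨((1 : G), (u : H)), u.2⟩
  map_one' := rfl
  map_mul' u v := Subtype.ext (by simp)

end Homs

section Aux

variable {𝕜 : Type*} [CommRing 𝕜]

lemma rep_inv_self {G V : Type*} [Group G] [AddCommGroup V] [Module 𝕜 V]
    (ρ : Representation 𝕜 G V) (x : G) (v : V) : ρ x⁻¹ (ρ x v) = v := by
  rw [← Module.End.mul_apply, ← map_mul, inv_mul_cancel, map_one, Module.End.one_apply]

lemma rep_self_inv {G V : Type*} [Group G] [AddCommGroup V] [Module 𝕜 V]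
    (ρ : Representation 𝕜 G V) (x : G) (v : V) : ρ x (ρ x⁻¹ v) = v := by
  rw [← Module.End.mul_apply, ← map_mul, mul_inv_cancel, map_one, Module.End.one_apply]

lemma extTen_hom_ext {A B C : Type*} [Group A] [Group B] [Group C]
    {M N P : Type*} [AddCommGroup M] [Module 𝕜 M] [AddCommGroup N] [Module 𝕜 N]
    [AddCommGroup P] [Module 𝕜 P]
    (X : Subgroup (A × B)) (Y : Subgroup (B × C))
    (ρ : Representation 𝕜 ↥X M) (σ : Representation 𝕜 ↥Y N)
    {f g : ExtTen X Y ρ σ →ₗ[𝕜] P}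
    (h : ∀ (m : M) (n : N), f (extMk X Y ρ σ (m ⊗ₜ[𝕜] n)) =
      g (extMk X Y ρ σ (m ⊗ₜ[𝕜] n))) : f = g :=
  Submodule.linearMap_qext _ (TensorProduct.ext' h)

end Aux

/-- For `X ≤ G×H`, `M` a `𝕜X`-module, `N` a `𝕜X°`-module and `P` a
`𝕜[X*X°]`-module there are natural `𝕜`-module isomorphisms
(a) `Hom_{𝕜[X*X°]}(M ⊗^{X,X°}_{𝕜H} N, P) ≅ Hom_{𝕜X°}(N, LHom^{X,X*X°}_{𝕜G}(M,P))`,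
`f ↦ (n ↦ (m ↦ f(m⊗n)))`, and
(b) `Hom_{𝕜[X*X°]}(M ⊗^{X,X°}_{𝕜H} N, P) ≅ Hom_{𝕜X}(M, RHom^{X°,X*X°}_{𝕜G}(N,P))`,
`f ↦ (m ↦ (n ↦ f(m⊗n)))`. -/
theorem stmt8 {𝕜 : Type*} [CommRing 𝕜]
    {G H : Type*} [Group G] [Group H] [Finite G] [Finite H]
    (X : Subgroup (G × H))
    {M N P : Type*} [AddCommGroup M] [Module 𝕜 M] [AddCommGroup N] [Module 𝕜 N]
    [AddCommGroup P] [Module 𝕜 P]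
    (ρM : Representation 𝕜 ↥X M) (ρN : Representation 𝕜 ↥(opp X) N)
    (ρP : Representation 𝕜 ↥(comp X (opp X)) P)
    -- the `𝕜[X*X°]`-module structure on `M ⊗^{X,X°}_{𝕜H} N`
    (ρT : Representation 𝕜 ↥(comp X (opp X)) (ExtTen X (opp X) ρM ρN))
    (hρT : ∀ (g g' : G) (hgg : (g, g') ∈ comp X (opp X)) (h : H)
      (h1 : (g, h) ∈ X) (h2 : (h, g') ∈ opp X) (m : M) (n : N),
      ρT ⟨(g, g'), hgg⟩ (extMk X (opp X) ρM ρN (m ⊗ₜ[𝕜] n)) =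
        extMk X (opp X) ρM ρN ((ρM ⟨(g, h), h1⟩ m) ⊗ₜ[𝕜] (ρN ⟨(h, g'), h2⟩ n)))
    -- the `𝕜X°`-module structure on `LHom^{X,X*X°}_{𝕜G}(M,P)`
    (ρE : Representation 𝕜 ↥(opp X) ↥(lHomSub X (comp X (opp X)) ρM ρP))
    (hρE : ∀ (b : H) (c : G) (hbc : (b, c) ∈ opp X)
      (a : G) (h1 : (a, b) ∈ X) (h2 : (a, c) ∈ comp X (opp X))
      (f : ↥(lHomSub X (comp X (opp X)) ρM ρP)) (m : M),
      ((ρE ⟨(b, c), hbc⟩ f : M →ₗ[𝕜] P)) m =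
        ρP ⟨(a, c), h2⟩ ((f : M →ₗ[𝕜] P) (ρM (⟨(a, b), h1⟩)⁻¹ m)))
    -- the `𝕜X`-module structure on `RHom^{X°,X*X°}_{𝕜G}(N,P)`
    (ρF : Representation 𝕜 ↥X ↥(rHomSub (opp X) (comp X (opp X)) ρN ρP))
    (hρF : ∀ (g : G) (h : H) (hgh : (g, h) ∈ X)
      (a : G) (h1 : (g, a) ∈ comp X (opp X)) (h2 : (h, a) ∈ opp X)
      (f : ↥(rHomSub (opp X) (comp X (opp X)) ρN ρP)) (n : N),
      ((ρF ⟨(g, h), hgh⟩ f : N →ₗ[𝕜] P)) n =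
        ρP ⟨(g, a), h1⟩ ((f : N →ₗ[𝕜] P) (ρN (⟨(h, a), h2⟩)⁻¹ n))) :
    (∃ e : ↥(fullHomSub ρT ρP) ≃ₗ[𝕜] ↥(fullHomSub ρN ρE),
      ∀ (f : ↥(fullHomSub ρT ρP)) (n : N) (m : M),
        (((e f : N →ₗ[𝕜] ↥(lHomSub X (comp X (opp X)) ρM ρP)) n : M →ₗ[𝕜] P)) m =
          (f : ExtTen X (opp X) ρM ρN →ₗ[𝕜] P) (extMk X (opp X) ρM ρN (m ⊗ₜ[𝕜] n))) ∧
    (∃ e : ↥(fullHomSub ρT ρP) ≃ₗ[𝕜] ↥(fullHomSub ρM ρF),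
      ∀ (f : ↥(fullHomSub ρT ρP)) (m : M) (n : N),
        (((e f : M →ₗ[𝕜] ↥(rHomSub (opp X) (comp X (opp X)) ρN ρP)) m : N →ₗ[𝕜] P)) n =
          (f : ExtTen X (opp X) ρM ρN →ₗ[𝕜] P) (extMk X (opp X) ρM ρN (m ⊗ₜ[𝕜] n))) := by
  constructor
  · -- Part (a)
    -- the forward map, at the level of raw linear maps
    have memL : ∀ (f : ↥(fullHomSub ρT ρP)) (n : N),
        (LinearMap.compr₂ (TensorProduct.mk 𝕜 M N).flip
          ((f : ExtTen X (opp X) ρM ρN →ₗ[𝕜] P) ∘ₗ extMk X (opp X) ρM ρN)) n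
          ∈ lHomSub X (comp X (opp X)) ρM ρP := by
      intro f n a h1 h2 m
      have e1 := hρT a 1 h2 1 h1 (opp X).one_mem m n
      have hone : (⟨((1 : H), (1 : G)), (opp X).one_mem⟩ : ↥(opp X)) = 1 := rfl
      rw [hone, map_one, Module.End.one_apply] at e1
      have e2 := f.2 ⟨(a, 1), h2⟩ (extMk X (opp X) ρM ρN (m ⊗ₜ[𝕜] n))
      simp only [LinearMap.compr₂_apply, LinearMap.flip_apply, TensorProduct.mk_apply,
        LinearMap.comp_apply]
      rw [← e1]
      exact e2
    let bigA : ↥(fullHomSub ρT ρP) → (N →ₗ[𝕜] ↥(lHomSub X (comp X (opp X)) ρM ρP)) :=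
      fun f => LinearMap.codRestrict _ (LinearMap.compr₂ (TensorProduct.mk 𝕜 M N).flip
        ((f : ExtTen X (opp X) ρM ρN →ₗ[𝕜] P) ∘ₗ extMk X (opp X) ρM ρN)) (memL f)
    have memA : ∀ f, bigA f ∈ fullHomSub ρN ρE := by
      intro f x n
      obtain ⟨⟨b, c⟩, hbc⟩ := x
      have hcb : (c, b) ∈ X := mem_opp.mp hbc
      have hcc : (c, c) ∈ comp X (opp X) := ⟨b, hcb, hbc⟩
      apply Subtype.ext
      apply LinearMap.ext
      intro m
      have e1 := hρT c c hcc b hcb hbc (ρM (⟨(c, b), hcb⟩)⁻¹ m) n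
      rw [rep_self_inv] at e1
      calc ((bigA f (ρN ⟨(b, c), hbc⟩ n) : M →ₗ[𝕜] P)) m
          = (f : ExtTen X (opp X) ρM ρN →ₗ[𝕜] P)
              (extMk X (opp X) ρM ρN (m ⊗ₜ[𝕜] ρN ⟨(b, c), hbc⟩ n)) := rfl
        _ = (f : ExtTen X (opp X) ρM ρN →ₗ[𝕜] P) (ρT ⟨(c, c), hcc⟩ (extMk X (opp X) ρM ρN
              ((ρM (⟨(c, b), hcb⟩)⁻¹ m) ⊗ₜ[𝕜] n))) := by rw [e1]
        _ = ρP ⟨(c, c), hcc⟩ ((f : ExtTen X (opp X) ρM ρN →ₗ[𝕜] P) (extMk X (opp X) ρM ρN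
              ((ρM (⟨(c, b), hcb⟩)⁻¹ m) ⊗ₜ[𝕜] n))) := f.2 _ _
        _ = ((ρE ⟨(b, c), hbc⟩ (bigA f n) : M →ₗ[𝕜] P)) m :=
              (hρE b c hbc c hcb hcc (bigA f n) m).symm
    let fwdA : ↥(fullHomSub ρT ρP) →ₗ[𝕜] ↥(fullHomSub ρN ρE) :=
      { toFun := fun f => ⟨bigA f, memA f⟩
        map_add' := by
          intro f g
          apply Subtype.ext; apply LinearMap.ext; intro n
          apply Subtype.ext; apply LinearMap.ext; intro m
          rfl
        map_smul' := by
          intro c f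
          apply Subtype.ext; apply LinearMap.ext; intro n
          apply Subtype.ext; apply LinearMap.ext; intro m
          rfl }
    -- the backward map
    have memKerA : ∀ (g : ↥(fullHomSub ρN ρE)),
        midRel X (opp X) ρM ρN ≤ LinearMap.ker (TensorProduct.lift
          (((lHomSub X (comp X (opp X)) ρM ρP).subtype ∘ₗ
            (g : N →ₗ[𝕜] ↥(lHomSub X (comp X (opp X)) ρM ρP))).flip)) := by
      intro g
      rw [midRel, Submodule.span_le]
      rintro z ⟨b, h1, h2, m, n, rfl⟩
      have h1' : ((1 : G), b) ∈ X := mem_opp.mp h2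
      have hinv : (⟨((1 : G), b), h1'⟩ : ↥X)⁻¹ = ⟨((1 : G), b⁻¹), h1⟩ :=
        Subtype.ext (by simp [Prod.ext_iff])
      have eg := congrArg Subtype.val (g.2 ⟨(b, 1), h2⟩ n)
      have eE := hρE b 1 h2 1 h1' (comp X (opp X)).one_mem ((g : N →ₗ[𝕜] ↥(lHomSub X (comp X (opp X)) ρM ρP)) n) m
      have hone : (⟨((1 : G), (1 : G)), (comp X (opp X)).one_mem⟩ :
          ↥(comp X (opp X))) = 1 := rfl
      rw [hone, map_one, Module.End.one_apply, hinv] at eE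
      simp only [SetLike.mem_coe, LinearMap.mem_ker, map_sub, TensorProduct.lift.tmul,
        LinearMap.flip_apply, LinearMap.comp_apply, Submodule.coe_subtype, sub_eq_zero]
      rw [eg, eE]
    let liftA : ↥(fullHomSub ρN ρE) → (ExtTen X (opp X) ρM ρN →ₗ[𝕜] P) :=
      fun g => Submodule.liftQ _ (TensorProduct.lift
        (((lHomSub X (comp X (opp X)) ρM ρP).subtype ∘ₗ
          (g : N →ₗ[𝕜] ↥(lHomSub X (comp X (opp X)) ρM ρP))).flip)) (memKerA g)
    have memTA : ∀ g, liftA g ∈ fullHomSub ρT ρP := by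
      intro g x z
      obtain ⟨⟨a, a'⟩, haa⟩ := x
      obtain ⟨h, hX1, hX2⟩ := id haa
      have key : (liftA g) ∘ₗ ρT ⟨(a, a'), haa⟩ = (ρP ⟨(a, a'), haa⟩) ∘ₗ liftA g := by
        apply extTen_hom_ext X (opp X) ρM ρN
        intro m n
        simp only [LinearMap.comp_apply]
        calc liftA g (ρT ⟨(a, a'), haa⟩ (extMk X (opp X) ρM ρN (m ⊗ₜ[𝕜] n)))
            = (((g : N →ₗ[𝕜] ↥(lHomSub X (comp X (opp X)) ρM ρP)) (ρN ⟨(h, a'), hX2⟩ n) : M →ₗ[𝕜] P)) (ρM ⟨(a, h), hX1⟩ m) := by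
              rw [hρT a a' haa h hX1 hX2 m n]; rfl
          _ = ((ρE ⟨(h, a'), hX2⟩ ((g : N →ₗ[𝕜] ↥(lHomSub X (comp X (opp X)) ρM ρP)) n) : M →ₗ[𝕜] P)) (ρM ⟨(a, h), hX1⟩ m) := by
              rw [g.2 ⟨(h, a'), hX2⟩ n]
          _ = ρP ⟨(a, a'), haa⟩ ((((g : N →ₗ[𝕜] ↥(lHomSub X (comp X (opp X)) ρM ρP)) n : M →ₗ[𝕜] P))
                (ρM (⟨(a, h), hX1⟩)⁻¹ (ρM ⟨(a, h), hX1⟩ m))) :=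
              hρE h a' hX2 a hX1 haa ((g : N →ₗ[𝕜] ↥(lHomSub X (comp X (opp X)) ρM ρP)) n) _
          _ = ρP ⟨(a, a'), haa⟩ (liftA g (extMk X (opp X) ρM ρN (m ⊗ₜ[𝕜] n))) := by
              rw [rep_inv_self]; rfl
      exact LinearMap.congr_fun key z
    let bwdA : ↥(fullHomSub ρN ρE) →ₗ[𝕜] ↥(fullHomSub ρT ρP) :=
      { toFun := fun g => ⟨liftA g, memTA g⟩
        map_add' := by
          intro g g'
          apply Subtype.ext
          apply extTen_hom_ext X (opp X) ρM ρN
          intro m n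
          rfl
        map_smul' := by
          intro c g
          apply Subtype.ext
          apply extTen_hom_ext X (opp X) ρM ρN
          intro m n
          rfl }
    refine ⟨LinearEquiv.ofLinear fwdA bwdA ?_ ?_, fun f n m => rfl⟩
    · apply LinearMap.ext; intro g
      apply Subtype.ext; apply LinearMap.ext; intro n
      apply Subtype.ext; apply LinearMap.ext; intro m
      rfl
    · apply LinearMap.ext; intro f
      apply Subtype.ext
      apply extTen_hom_ext X (opp X) ρM ρN
      intro m n
      rfl
  · -- Part (b)
    have memR : ∀ (f : ↥(fullHomSub ρT ρP)) (m : M),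
        (LinearMap.compr₂ (TensorProduct.mk 𝕜 M N)
          ((f : ExtTen X (opp X) ρM ρN →ₗ[𝕜] P) ∘ₗ extMk X (opp X) ρM ρN)) m
          ∈ rHomSub (opp X) (comp X (opp X)) ρN ρP := by
      intro f m a h1 h2 n
      have e1 := hρT 1 a h2 1 X.one_mem h1 m n
      have hone : (⟨((1 : G), (1 : H)), X.one_mem⟩ : ↥X) = 1 := rfl
      rw [hone, map_one, Module.End.one_apply] at e1
      have e2 := f.2 ⟨(1, a), h2⟩ (extMk X (opp X) ρM ρN (m ⊗ₜ[𝕜] n))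
      simp only [LinearMap.compr₂_apply, TensorProduct.mk_apply, LinearMap.comp_apply]
      rw [← e1]
      exact e2
    let bigB : ↥(fullHomSub ρT ρP) → (M →ₗ[𝕜] ↥(rHomSub (opp X) (comp X (opp X)) ρN ρP)) :=
      fun f => LinearMap.codRestrict _ (LinearMap.compr₂ (TensorProduct.mk 𝕜 M N)
        ((f : ExtTen X (opp X) ρM ρN →ₗ[𝕜] P) ∘ₗ extMk X (opp X) ρM ρN)) (memR f)
    have memB : ∀ f, bigB f ∈ fullHomSub ρM ρF := by
      intro f x m
      obtain ⟨⟨a, b⟩, hab⟩ := x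
      have hba : (b, a) ∈ opp X := mem_opp.mpr hab
      have haa : (a, a) ∈ comp X (opp X) := ⟨b, hab, hba⟩
      apply Subtype.ext
      apply LinearMap.ext
      intro n
      have e1 := hρT a a haa b hab hba m (ρN (⟨(b, a), hba⟩)⁻¹ n)
      rw [rep_self_inv] at e1
      calc ((bigB f (ρM ⟨(a, b), hab⟩ m) : N →ₗ[𝕜] P)) n
          = (f : ExtTen X (opp X) ρM ρN →ₗ[𝕜] P)
              (extMk X (opp X) ρM ρN ((ρM ⟨(a, b), hab⟩ m) ⊗ₜ[𝕜] n)) := rfl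
        _ = (f : ExtTen X (opp X) ρM ρN →ₗ[𝕜] P) (ρT ⟨(a, a), haa⟩ (extMk X (opp X) ρM ρN
              (m ⊗ₜ[𝕜] (ρN (⟨(b, a), hba⟩)⁻¹ n)))) := by rw [e1]
        _ = ρP ⟨(a, a), haa⟩ ((f : ExtTen X (opp X) ρM ρN →ₗ[𝕜] P) (extMk X (opp X) ρM ρN
              (m ⊗ₜ[𝕜] (ρN (⟨(b, a), hba⟩)⁻¹ n)))) := f.2 _ _
        _ = ((ρF ⟨(a, b), hab⟩ (bigB f m) : N →ₗ[𝕜] P)) n :=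
              (hρF a b hab a haa hba (bigB f m) n).symm
    let fwdB : ↥(fullHomSub ρT ρP) →ₗ[𝕜] ↥(fullHomSub ρM ρF) :=
      { toFun := fun f => ⟨bigB f, memB f⟩
        map_add' := by
          intro f g
          apply Subtype.ext; apply LinearMap.ext; intro m
          apply Subtype.ext; apply LinearMap.ext; intro n
          rfl
        map_smul' := by
          intro c f
          apply Subtype.ext; apply LinearMap.ext; intro m
          apply Subtype.ext; apply LinearMap.ext; intro n
          rfl }
    have memKerB : ∀ (g : ↥(fullHomSub ρM ρF)),
        midRel X (opp X) ρM ρN ≤ LinearMap.ker (TensorProduct.lift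
          ((rHomSub (opp X) (comp X (opp X)) ρN ρP).subtype ∘ₗ
            (g : M →ₗ[𝕜] ↥(rHomSub (opp X) (comp X (opp X)) ρN ρP)))) := by
      intro g
      rw [midRel, Submodule.span_le]
      rintro z ⟨b, h1, h2, m, n, rfl⟩
      have h2' : (b⁻¹, (1 : G)) ∈ opp X := mem_opp.mpr h1
      have hinv : (⟨(b⁻¹, (1 : G)), h2'⟩ : ↥(opp X))⁻¹ = ⟨(b, (1 : G)), h2⟩ :=
        Subtype.ext (by simp [Prod.ext_iff])
      have eg := congrArg Subtype.val (g.2 ⟨((1 : G), b⁻¹), h1⟩ m)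
      have eF := hρF 1 b⁻¹ h1 1 (comp X (opp X)).one_mem h2' ((g : M →ₗ[𝕜] ↥(rHomSub (opp X) (comp X (opp X)) ρN ρP)) m) n
      have hone : (⟨((1 : G), (1 : G)), (comp X (opp X)).one_mem⟩ :
          ↥(comp X (opp X))) = 1 := rfl
      rw [hone, map_one, Module.End.one_apply, hinv] at eF
      simp only [SetLike.mem_coe, LinearMap.mem_ker, map_sub, TensorProduct.lift.tmul,
        LinearMap.comp_apply, Submodule.coe_subtype, sub_eq_zero]
      rw [eg, eF]
    let liftB : ↥(fullHomSub ρM ρF) → (ExtTen X (opp X) ρM ρN →ₗ[𝕜] P) :=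
      fun g => Submodule.liftQ _ (TensorProduct.lift
        ((rHomSub (opp X) (comp X (opp X)) ρN ρP).subtype ∘ₗ
          (g : M →ₗ[𝕜] ↥(rHomSub (opp X) (comp X (opp X)) ρN ρP)))) (memKerB g)
    have memTB : ∀ g, liftB g ∈ fullHomSub ρT ρP := by
      intro g x z
      obtain ⟨⟨a, a'⟩, haa⟩ := x
      obtain ⟨h, hX1, hX2⟩ := id haa
      have key : (liftB g) ∘ₗ ρT ⟨(a, a'), haa⟩ = (ρP ⟨(a, a'), haa⟩) ∘ₗ liftB g := by
        apply extTen_hom_ext X (opp X) ρM ρN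
        intro m n
        simp only [LinearMap.comp_apply]
        calc liftB g (ρT ⟨(a, a'), haa⟩ (extMk X (opp X) ρM ρN (m ⊗ₜ[𝕜] n)))
            = (((g : M →ₗ[𝕜] ↥(rHomSub (opp X) (comp X (opp X)) ρN ρP)) (ρM ⟨(a, h), hX1⟩ m) : N →ₗ[𝕜] P)) (ρN ⟨(h, a'), hX2⟩ n) := by
              rw [hρT a a' haa h hX1 hX2 m n]; rfl
          _ = ((ρF ⟨(a, h), hX1⟩ ((g : M →ₗ[𝕜] ↥(rHomSub (opp X) (comp X (opp X)) ρN ρP)) m) : N →ₗ[𝕜] P)) (ρN ⟨(h, a'), hX2⟩ n) := by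
              rw [g.2 ⟨(a, h), hX1⟩ m]
          _ = ρP ⟨(a, a'), haa⟩ ((((g : M →ₗ[𝕜] ↥(rHomSub (opp X) (comp X (opp X)) ρN ρP)) m : N →ₗ[𝕜] P))
                (ρN (⟨(h, a'), hX2⟩)⁻¹ (ρN ⟨(h, a'), hX2⟩ n))) :=
              hρF a h hX1 a' haa hX2 ((g : M →ₗ[𝕜] ↥(rHomSub (opp X) (comp X (opp X)) ρN ρP)) m) _
          _ = ρP ⟨(a, a'), haa⟩ (liftB g (extMk X (opp X) ρM ρN (m ⊗ₜ[𝕜] n))) := by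
              rw [rep_inv_self]; rfl
      exact LinearMap.congr_fun key z
    let bwdB : ↥(fullHomSub ρM ρF) →ₗ[𝕜] ↥(fullHomSub ρT ρP) :=
      { toFun := fun g => ⟨liftB g, memTB g⟩
        map_add' := by
          intro g g'
          apply Subtype.ext
          apply extTen_hom_ext X (opp X) ρM ρN
          intro m n
          rfl
        map_smul' := by
          intro c g
          apply Subtype.ext
          apply extTen_hom_ext X (opp X) ρM ρN
          intro m n
          rfl }
    refine ⟨LinearEquiv.ofLinear fwdB bwdB ?_ ?_, fun f m n => rfl⟩
    · apply LinearMap.ext; intro g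
      apply Subtype.ext; apply LinearMap.ext; intro m
      apply Subtype.ext; apply LinearMap.ext; intro n
      rfl
    · apply LinearMap.ext; intro f
      apply Subtype.ext
      apply extTen_hom_ext X (opp X) ρM ρN
      intro m n
      rfl

end Stmt8
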